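/- Let S be a countable subset of the Euclidean plane ℝ² and let N and N₁ be two distinct points of ℝ² neither of which lies in S. Then there exists a point c ∈ ℝ² with dist(c, N) = dist(c, N₁) such that the circle with centre c and radius dist(c, N) contains no point of S; that is, for every a ∈ S, dist(c, a) ≠ dist(c, N). -/

import Mathlib

open scoped RealInnerProductSpace

/-- Existence step in Cantor's proof: there is a circle through N and N₁ whose
circumference avoids the countable set S entirely. -/
theorem exists_circle_avoiding_countable_set
    (S : Set (EuclideanSpace ℝ (Fin 2))) (hS : S.Countable)
    (N N₁ : EuclideanSpace ℝ (Fin 2)) (hNN₁ : N ≠ N₁) (hN : N ∉ S) (hN₁ : N₁ ∉ S) :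
    ∃ c : EuclideanSpace ℝ (Fin 2),
      dist c N = dist c N₁ ∧ ∀ a ∈ S, dist c a ≠ dist c N := by
  classical
  set w : EuclideanSpace ℝ (Fin 2) := N₁ - N with hw_def
  have hw : w ≠ 0 := sub_ne_zero.mpr (Ne.symm hNN₁)
  have hwnorm : ‖w‖ ≠ 0 := norm_ne_zero_iff.mpr hw
  -- v is orthogonal to w
  set v : EuclideanSpace ℝ (Fin 2) := !₂[-(w 1), w 0] with hv_def
  have hv0 : v 0 = -(w 1) := rfl
  have hv1 : v 1 = w 0 := rfl
  have hinner : ∀ x y : EuclideanSpace ℝ (Fin 2), ⟪x, y⟫ = x 0 * y 0 + x 1 * y 1 := by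
    intro x y
    simp [PiLp.inner_apply, Fin.sum_univ_two, RCLike.inner_apply]
    ring
  have hvw : ⟪w, v⟫ = 0 := by rw [hinner, hv0, hv1]; ring
  -- midpoint
  set m : EuclideanSpace ℝ (Fin 2) := N + (2⁻¹ : ℝ) • w with hm_def
  have hmN : m - N = (2⁻¹ : ℝ) • w := by rw [hm_def]; abel
  have hmN₁ : m - N₁ = -((2⁻¹ : ℝ) • w) := by
    rw [hm_def, hw_def]
    rw [show N + (2⁻¹ : ℝ) • (N₁ - N) - N₁ = -((2⁻¹ : ℝ) • (N₁ - N)) + ((N - N₁) + (N₁ - N)) by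
      module]
    abel
  have hm0 : m 0 = N 0 + 2⁻¹ * w 0 := by rw [hm_def]; simp
  have hm1 : m 1 = N 1 + 2⁻¹ * w 1 := by rw [hm_def]; simp
  have hw0' : w 0 = N₁ 0 - N 0 := by rw [hw_def]; simp
  have hw1' : w 1 = N₁ 1 - N 1 := by rw [hw_def]; simp
  clear_value w v m
  -- key quadratic expansion
  have hkey : ∀ (y : EuclideanSpace ℝ (Fin 2)) (t : ℝ),
      dist (m + t • v) y ^ 2 = ‖m - y‖ ^ 2 + 2 * t * ⟪m - y, v⟫ + t ^ 2 * ‖v‖ ^ 2 := by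
    intro y t
    rw [dist_eq_norm, show m + t • v - y = (m - y) + t • v by abel, norm_add_sq_real,
      real_inner_smul_right, norm_smul]
    simp [mul_pow]
    ring
  -- equality of distances iff linear condition
  have hiff : ∀ (y : EuclideanSpace ℝ (Fin 2)) (t : ℝ),
      dist (m + t • v) y = dist (m + t • v) N ↔
        ‖m - y‖ ^ 2 + 2 * t * ⟪m - y, v⟫ = ‖m - N‖ ^ 2 + 2 * t * ⟪m - N, v⟫ := by
    intro y t
    rw [← sq_eq_sq₀ dist_nonneg dist_nonneg, hkey, hkey]
    constructor <;> intro h <;> linarith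
  -- for each a ∉ {N, N₁}, the bad set of parameters is a subsingleton
  have hsub : ∀ a : EuclideanSpace ℝ (Fin 2), a ≠ N → a ≠ N₁ →
      {t : ℝ | dist (m + t • v) a = dist (m + t • v) N}.Subsingleton := by
    intro a haN haN₁ t₁ ht₁ t₂ ht₂
    by_contra hne
    rw [Set.mem_setOf_eq, hiff] at ht₁ ht₂
    have hdiff : 2 * (t₁ - t₂) * (⟪m - a, v⟫ - ⟪m - N, v⟫) = 0 := by linarith
    have hiz : ⟪m - a, v⟫ - ⟪m - N, v⟫ = 0 := by
      rcases mul_eq_zero.mp hdiff with h | h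
      · exfalso
        rcases mul_eq_zero.mp h with h' | h'
        · norm_num at h'
        · exact hne (by linarith)
      · exact h
    -- so ⟪N - a, v⟫ = 0 and ‖m - a‖² = ‖m - N‖²
    have hNa : ⟪N - a, v⟫ = 0 := by
      rw [← inner_sub_left, show m - a - (m - N) = N - a by abel] at hiz
      exact hiz
    have hprod : t₁ * (⟪m - a, v⟫ - ⟪m - N, v⟫) = 0 := by rw [hiz]; ring
    have hnormeq : ‖m - a‖ ^ 2 = ‖m - N‖ ^ 2 := by linear_combination ht₁ - 2 * hprod
    -- switch to coordinates
    have hnormsq : ∀ x : EuclideanSpace ℝ (Fin 2), ‖x‖ ^ 2 = x 0 ^ 2 + x 1 ^ 2 := by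
      intro x
      rw [← real_inner_self_eq_norm_sq, hinner]
      ring
    obtain ⟨p, hp_def⟩ : ∃ p : ℝ, a 0 - N 0 = p := ⟨_, rfl⟩
    obtain ⟨q, hq_def⟩ : ∃ q : ℝ, a 1 - N 1 = q := ⟨_, rfl⟩
    have hcross : p * w 1 = q * w 0 := by
      rw [hinner, hv0, hv1] at hNa
      simp only [PiLp.sub_apply] at hNa
      rw [← hp_def, ← hq_def]
      linear_combination hNa
    have hsq : p ^ 2 + q ^ 2 = p * w 0 + q * w 1 := by
      rw [hnormsq, hnormsq] at hnormeq
      simp only [PiLp.sub_apply] at hnormeq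
      rw [hm0, hm1] at hnormeq
      rw [← hp_def, ← hq_def]
      linear_combination hnormeq
    have hwcoord : w 0 ≠ 0 ∨ w 1 ≠ 0 := by
      by_contra hcon
      push_neg at hcon
      apply hw
      ext i
      fin_cases i
      · exact hcon.1
      · exact hcon.2
    obtain ⟨s, hsp, hsq'⟩ : ∃ s : ℝ, p = s * w 0 ∧ q = s * w 1 := by
      rcases hwcoord with h | h
      · refine ⟨p / w 0, (div_mul_cancel₀ p h).symm, ?_⟩
        field_simp
        linarith [hcross]
      · refine ⟨q / w 1, ?_, (div_mul_cancel₀ q h).symm⟩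
        field_simp
        linarith [hcross]
    have hwpos : (0:ℝ) < w 0 ^ 2 + w 1 ^ 2 := by
      rcases hwcoord with h | h <;> positivity
    have hs01 : s = 0 ∨ s = 1 := by
      have hfac : s * (s - 1) * (w 0 ^ 2 + w 1 ^ 2) = 0 := by
        rw [hsp, hsq'] at hsq
        linear_combination hsq
      rcases mul_eq_zero.mp hfac with h | h
      · rcases mul_eq_zero.mp h with h' | h'
        · exact Or.inl h'
        · exact Or.inr (by linarith)
      · linarith [hwpos]
    rcases hs01 with h | h
    · apply haN
      rw [h, zero_mul] at hsp hsq'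
      ext i
      fin_cases i
      · show a 0 = N 0
        rw [← hp_def] at hsp; linarith
      · show a 1 = N 1
        rw [← hq_def] at hsq'; linarith
    · apply haN₁
      rw [h, one_mul] at hsp hsq'
      ext i
      fin_cases i
      · show a 0 = N₁ 0
        rw [← hp_def, hw0'] at hsp; linarith
      · show a 1 = N₁ 1
        rw [← hq_def, hw1'] at hsq'; linarith
  -- the bad parameter set is countable
  set T : Set ℝ := ⋃ a ∈ S, {t : ℝ | dist (m + t • v) a = dist (m + t • v) N} with hT_def
  have hTc : T.Countable := by
    apply hS.biUnion
    intro a ha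
    exact (hsub a (fun h => hN (h ▸ ha)) (fun h => hN₁ (h ▸ ha))).countable
  have hTneU : T ≠ Set.univ := by
    intro h
    rw [h] at hTc
    exact Cardinal.not_countable_real hTc
  obtain ⟨t, ht⟩ := Set.ne_univ_iff_exists_notMem T |>.mp hTneU
  refine ⟨m + t • v, ?_, ?_⟩
  · -- on the perpendicular bisector
    rw [← sq_eq_sq₀ dist_nonneg dist_nonneg, hkey, hkey, hmN, hmN₁]
    rw [norm_neg, inner_neg_left, real_inner_smul_left, hvw]
    ring
  · intro a ha hcontra
    apply ht
    rw [hT_def]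
    exact Set.mem_biUnion ha hcontra
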